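/- Let n ≥ 1, let W be an n×n real doubly stochastic matrix such that every entry of W^n is strictly positive, and let x : ℕ → ℝ^n evolve according to x(k+1) = W(x(k) + θ(k)). Fix h ≥ 1 and suppose there exist α > 0 and ρ ∈ [0,1) such that for every ℓ ∈ {0,1,...,h−1} and every k ∈ ℕ, ‖θ(ℓ + k h)‖_∞ ≤ α ρ^k, and suppose the zero-sum condition lim_{K→∞} ∑_{ℓ=0}^{K} ∑_{i=1}^{n} θ_i(ℓ) = 0 holds. Then for every i, lim_{k→∞} x_i(k) = x̄ = (1/n) ∑_{i=1}^n x_i(0). -/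
import Mathlib


open Filter Finset



variable {n : ℕ} [Nonempty (Fin n)]

noncomputable def osc (y : Fin n → ℝ) : ℝ :=
  Finset.univ.sup' Finset.univ_nonempty y - Finset.univ.inf' Finset.univ_nonempty y

lemma osc_nonneg (y : Fin n → ℝ) : 0 ≤ osc y := by
  obtain ⟨i⟩ := ‹Nonempty (Fin n)›
  have h1 : Finset.univ.inf' Finset.univ_nonempty y ≤ y i := Finset.inf'_le y (Finset.mem_univ i)
  have h2 : y i ≤ Finset.univ.sup' Finset.univ_nonempty y := Finset.le_sup' y (Finset.mem_univ i)
  unfold osc; linarith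

lemma osc_add_le (y z : Fin n → ℝ) : osc (y + z) ≤ osc y + osc z := by
  have h1 : Finset.univ.sup' Finset.univ_nonempty (y + z) ≤
      Finset.univ.sup' Finset.univ_nonempty y + Finset.univ.sup' Finset.univ_nonempty z := by
    apply Finset.sup'_le
    intro i _
    exact add_le_add (Finset.le_sup' y (Finset.mem_univ i)) (Finset.le_sup' z (Finset.mem_univ i))
  have h2 : Finset.univ.inf' Finset.univ_nonempty y + Finset.univ.inf' Finset.univ_nonempty z ≤
      Finset.univ.inf' Finset.univ_nonempty (y + z) := by
    apply Finset.le_inf'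
    intro i _
    exact add_le_add (Finset.inf'_le y (Finset.mem_univ i)) (Finset.inf'_le z (Finset.mem_univ i))
  unfold osc; linarith

lemma osc_le_two_norm (z : Fin n → ℝ) : osc z ≤ 2 * ‖z‖ := by
  have h1 : Finset.univ.sup' Finset.univ_nonempty z ≤ ‖z‖ := by
    apply Finset.sup'_le
    intro i _
    calc z i ≤ |z i| := le_abs_self _
    _ ≤ ‖z‖ := by rw [← Real.norm_eq_abs]; exact norm_le_pi_norm z i
  have h2 : -‖z‖ ≤ Finset.univ.inf' Finset.univ_nonempty z := by
    apply Finset.le_inf'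
    intro i _
    have : |z i| ≤ ‖z‖ := by rw [← Real.norm_eq_abs]; exact norm_le_pi_norm z i
    have := neg_abs_le (z i); linarith
  unfold osc; linarith

lemma osc_sum_le {ι : Type*} (s : Finset ι) (f : ι → Fin n → ℝ) :
    osc (∑ j ∈ s, f j) ≤ ∑ j ∈ s, osc (f j) := by
  classical
  induction s using Finset.cons_induction with
  | empty =>
      simp only [Finset.sum_empty]
      have h1 := osc_le_two_norm (0 : Fin n → ℝ)
      simp at h1
      linarith
  | cons a s ha ih =>
      rw [Finset.sum_cons, Finset.sum_cons]
      calc osc (f a + ∑ j ∈ s, f j) ≤ osc (f a) + osc (∑ j ∈ s, f j) := osc_add_le _ _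
      _ ≤ osc (f a) + ∑ j ∈ s, osc (f j) := by linarith

lemma abs_sub_avg_le_osc (hn : 0 < n) (y : Fin n → ℝ) (i : Fin n) :
    |y i - (∑ j, y j) / n| ≤ osc y := by
  set M := Finset.univ.sup' Finset.univ_nonempty y with hM
  set m := Finset.univ.inf' Finset.univ_nonempty y with hm
  have hnn : (0:ℝ) < n := by exact_mod_cast hn
  have h1 : (n:ℝ) * m ≤ ∑ j, y j := by
    calc (n:ℝ) * m = ∑ _j : Fin n, m := by rw [Finset.sum_const, Finset.card_univ, Fintype.card_fin, nsmul_eq_mul]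
    _ ≤ ∑ j, y j := Finset.sum_le_sum fun j _ => Finset.inf'_le y (Finset.mem_univ j)
  have h2 : ∑ j, y j ≤ (n:ℝ) * M := by
    calc ∑ j, y j ≤ ∑ _j : Fin n, M := Finset.sum_le_sum fun j _ => Finset.le_sup' y (Finset.mem_univ j)
    _ = (n:ℝ) * M := by rw [Finset.sum_const, Finset.card_univ, Fintype.card_fin, nsmul_eq_mul]
  have hma : m ≤ (∑ j, y j) / n := by rw [le_div_iff₀ hnn]; linarith
  have haM : (∑ j, y j) / n ≤ M := by rw [div_le_iff₀ hnn]; linarith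
  have hiM := Finset.le_sup' y (Finset.mem_univ i)
  have him := Finset.inf'_le y (Finset.mem_univ i)
  rw [abs_le]
  unfold osc
  constructor <;> [skip; skip] <;> simp only [← hM, ← hm] <;> linarith

lemma osc_mulVec_le (P : Matrix (Fin n) (Fin n) ℝ) (δ : ℝ) (hδ : 0 ≤ δ)
    (hP : ∀ i j, δ ≤ P i j) (hrow : ∀ i, ∑ j, P i j = 1)
    (y : Fin n → ℝ) : osc (P.mulVec y) ≤ (1 - n * δ) * osc y := by
  obtain ⟨i, -, hi⟩ := Finset.exists_mem_eq_sup' (Finset.univ_nonempty) (P.mulVec y)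
  obtain ⟨i', -, hi'⟩ := Finset.exists_mem_eq_inf' (Finset.univ_nonempty) (P.mulVec y)
  set M := Finset.univ.sup' Finset.univ_nonempty y with hMdef
  set m := Finset.univ.inf' Finset.univ_nonempty y with hmdef
  set a : Fin n → ℝ := fun j => min (P i j) (P i' j) with hadef
  set A := ∑ j, a j with hA
  have hosc : osc y = M - m := rfl
  have hoscy : 0 ≤ osc y := osc_nonneg y
  have hAδ : (n:ℝ) * δ ≤ A := by
    calc (n:ℝ) * δ = ∑ _j : Fin n, δ := by
          rw [Finset.sum_const, Finset.card_univ, Fintype.card_fin, nsmul_eq_mul]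
    _ ≤ A := Finset.sum_le_sum fun j _ => le_min (hP i j) (hP i' j)
  have key1 : ∑ j, (P i j - a j) * y j ≤ (1 - A) * M := by
    calc ∑ j, (P i j - a j) * y j ≤ ∑ j, (P i j - a j) * M := by
          apply Finset.sum_le_sum
          intro j _
          exact mul_le_mul_of_nonneg_left (Finset.le_sup' y (Finset.mem_univ j))
            (by have := min_le_left (P i j) (P i' j); simp only [hadef]; linarith)
    _ = (1 - A) * M := by
          rw [← Finset.sum_mul]
          congr 1
          rw [Finset.sum_sub_distrib, hrow i, hA]
  have key2 : (1 - A) * m ≤ ∑ j, (P i' j - a j) * y j := by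
    calc (1 - A) * m = ∑ j, (P i' j - a j) * m := by
          rw [← Finset.sum_mul]
          congr 1
          rw [Finset.sum_sub_distrib, hrow i', hA]
    _ ≤ ∑ j, (P i' j - a j) * y j := by
          apply Finset.sum_le_sum
          intro j _
          exact mul_le_mul_of_nonneg_left (Finset.inf'_le y (Finset.mem_univ j))
            (by have := min_le_right (P i j) (P i' j); simp only [hadef]; linarith)
  have hexpand : P.mulVec y i - P.mulVec y i'
      = (∑ j, (P i j - a j) * y j) - ∑ j, (P i' j - a j) * y j := by
    simp only [Matrix.mulVec, dotProduct, sub_mul, Finset.sum_sub_distrib]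
    ring
  have hfin : osc (P.mulVec y) = P.mulVec y i - P.mulVec y i' := by
    unfold osc; rw [← hi, ← hi']
  rw [hfin, hexpand]
  have h1A : (1 - A) * (M - m) ≤ (1 - n * δ) * (M - m) := by
    apply mul_le_mul_of_nonneg_right _ (by rw [← hosc] at *; linarith)
    linarith
  rw [hosc]
  nlinarith [key1, key2]

lemma pow_row_stochastic {n : ℕ} (W : Matrix (Fin n) (Fin n) ℝ)
    (h0 : ∀ i j, 0 ≤ W i j) (h1 : ∀ i, ∑ j, W i j = 1) (k : ℕ) :
    (∀ i j, 0 ≤ (W ^ k) i j) ∧ (∀ i, ∑ j, (W ^ k) i j = 1) := by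
  induction k with
  | zero =>
      constructor
      · intro i j
        simp only [pow_zero, Matrix.one_apply]
        split <;> norm_num
      · intro i
        simp [pow_zero, Matrix.one_apply]
  | succ k ih =>
      constructor
      · intro i j
        rw [pow_succ, Matrix.mul_apply]
        exact Finset.sum_nonneg fun l _ => mul_nonneg (ih.1 i l) (h0 l j)
      · intro i
        simp only [pow_succ, Matrix.mul_apply]
        rw [Finset.sum_comm]
        calc ∑ l, ∑ j, (W ^ k) i l * W l j = ∑ l, (W ^ k) i l * ∑ j, W l j := by
              simp [Finset.mul_sum]
        _ = 1 := by simp only [h1]; simpa using ih.2 i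

lemma traj_formula {n : ℕ} (W : Matrix (Fin n) (Fin n) ℝ) (x θ : ℕ → Fin n → ℝ)
    (hdyn : ∀ k, x (k + 1) = W.mulVec (x k + θ k)) (m t : ℕ) :
    x (m + t) = (W ^ t).mulVec (x m)
      + ∑ j ∈ Finset.range t, (W ^ (t - j)).mulVec (θ (m + j)) := by
  induction t with
  | zero => simp [Matrix.one_mulVec]
  | succ t ih =>
      have e : m + (t + 1) = (m + t) + 1 := by ring
      rw [e, hdyn, ih, Matrix.mulVec_add, Matrix.mulVec_add]
      rw [Finset.sum_range_succ]
      have hWsum : W.mulVec (∑ j ∈ Finset.range t, (W ^ (t - j)).mulVec (θ (m + j)))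
          = ∑ j ∈ Finset.range t, W.mulVec ((W ^ (t - j)).mulVec (θ (m + j))) := by
        exact map_sum W.mulVecLin _ _
      rw [hWsum]
      have h1 : W.mulVec ((W ^ t).mulVec (x m)) = (W ^ (t + 1)).mulVec (x m) := by
        rw [Matrix.mulVec_mulVec, ← pow_succ']
      have h2 : ∀ j ∈ Finset.range t,
          W.mulVec ((W ^ (t - j)).mulVec (θ (m + j))) = (W ^ (t + 1 - j)).mulVec (θ (m + j)) := by
        intro j hj
        rw [Finset.mem_range] at hj
        have he : t - j + 1 = t + 1 - j := by omega
        rw [Matrix.mulVec_mulVec, ← pow_succ', he]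
      rw [Finset.sum_congr rfl h2, h1]
      have h3 : (W ^ (t + 1 - t)) = W := by
        simp [Nat.add_sub_cancel_left]
      rw [h3]
      abel

lemma tendsto_zero_of_contract (a ε : ℕ → ℝ) (τ : ℝ) (hτ0 : 0 ≤ τ) (hτ1 : τ < 1)
    (ha : ∀ k, 0 ≤ a k) (hrec : ∀ k, a (k + 1) ≤ τ * a k + ε k)
    (hε : Tendsto ε atTop (nhds 0)) : Tendsto a atTop (nhds 0) := by
  rw [Metric.tendsto_atTop]
  intro e he
  have he' : 0 < (1 - τ) * e / 2 := by nlinarith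
  rw [Metric.tendsto_atTop] at hε
  obtain ⟨K, hK⟩ := hε ((1 - τ) * e / 2) he'
  have hεK : ∀ k ≥ K, ε k ≤ (1 - τ) * e / 2 := by
    intro k hk
    have := hK k hk
    rw [Real.dist_eq, sub_zero] at this
    exact (le_abs_self _).trans this.le
  have claim : ∀ t, a (K + t) ≤ τ ^ t * a K + e / 2 := by
    intro t
    induction t with
    | zero => simp; linarith
    | succ t ih =>
        have h1 : a (K + (t + 1)) ≤ τ * a (K + t) + ε (K + t) := by
          have h := hrec (K + t)
          have he2 : K + (t + 1) = K + t + 1 := by omega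
          rwa [he2]
        have h2 : ε (K + t) ≤ (1 - τ) * e / 2 := hεK _ (by omega)
        have h3 : τ * a (K + t) ≤ τ * (τ ^ t * a K + e / 2) :=
          mul_le_mul_of_nonneg_left ih hτ0
        calc a (K + (t + 1)) ≤ τ * (τ ^ t * a K + e / 2) + (1 - τ) * e / 2 := by linarith
        _ = τ ^ (t + 1) * a K + e / 2 := by ring
  have htend : Tendsto (fun t => τ ^ t * a K) atTop (nhds 0) := by
    have := (tendsto_pow_atTop_nhds_zero_of_lt_one hτ0 hτ1).mul_const (a K)
    simpa using this
  rw [Metric.tendsto_atTop] at htend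
  obtain ⟨T, hT⟩ := htend (e / 2) (by linarith)
  refine ⟨K + T, fun k hk => ?_⟩
  have hkK : K ≤ k := by omega
  have hk2 : a k ≤ τ ^ (k - K) * a K + e / 2 := by
    have := claim (k - K)
    rwa [Nat.add_sub_cancel' hkK] at this
  have hmono : τ ^ (k - K) ≤ τ ^ T := pow_le_pow_of_le_one hτ0 hτ1.le (by omega)
  have hTk : τ ^ T * a K < e / 2 := by
    have := hT T le_rfl
    rw [Real.dist_eq, sub_zero] at this
    exact (le_abs_self _).trans_lt this
  have : τ ^ (k - K) * a K ≤ τ ^ T * a K := mul_le_mul_of_nonneg_right hmono (ha K)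
  rw [Real.dist_eq, sub_zero, abs_of_nonneg (ha k)]
  linarith

/-- If the noise process is split into `h` interleaved sub-sequences, each of which
decays exponentially in its own index, and the total noise is zero, then the noisy
consensus iteration converges to the exact average of the initial states. -/
theorem scda_subsequence_condition
    (n : ℕ) (hn : 1 ≤ n) (W : Matrix (Fin n) (Fin n) ℝ)
    (hW_nonneg : ∀ i j, 0 ≤ W i j)
    (hW_row : ∀ i, ∑ j, W i j = 1)
    (hW_col : ∀ j, ∑ i, W i j = 1)
    (hWn_pos : ∀ i j, 0 < (W ^ n) i j)
    (x θ : ℕ → Fin n → ℝ)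
    (hdyn : ∀ k, x (k + 1) = W.mulVec (x k + θ k))
    (h : ℕ) (hh : 1 ≤ h)
    (α ρ : ℝ) (hα : 0 < α) (hρ0 : 0 ≤ ρ) (hρ1 : ρ < 1)
    (hθ : ∀ ℓ < h, ∀ k : ℕ, ‖θ (ℓ + k * h)‖ ≤ α * ρ ^ k)
    (hzero : Tendsto (fun K => ∑ ℓ ∈ Finset.range (K + 1), ∑ i, θ ℓ i)
      atTop (nhds 0)) :
    ∀ i, Tendsto (fun k => x k i) atTop (nhds ((∑ i, x 0 i) / n)) := by
  have hn0 : 0 < n := hn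
  haveI : Nonempty (Fin n) := Fin.pos_iff_nonempty.mp hn0
  have hh0 : 0 < h := hh
  -- noise norms tend to zero
  set c : ℕ → ℝ := fun m => ‖θ m‖ with hcdef
  have hcb : ∀ m, c m ≤ α * ρ ^ (m / h) := by
    intro m
    have := hθ (m % h) (Nat.mod_lt m hh0) (m / h)
    rwa [Nat.mod_add_div'] at this
  have hc0 : ∀ m, 0 ≤ c m := fun m => norm_nonneg _
  have hdivh : Tendsto (fun m : ℕ => m / h) atTop atTop := by
    apply tendsto_atTop_atTop.mpr
    intro b
    exact ⟨b * h, fun m hm => (Nat.le_div_iff_mul_le hh0).2 hm⟩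
  have hgeo : Tendsto (fun m : ℕ => α * ρ ^ (m / h)) atTop (nhds 0) := by
    have := ((tendsto_pow_atTop_nhds_zero_of_lt_one hρ0 hρ1).comp hdivh).const_mul α
    simpa using this
  have hctend : Tendsto c atTop (nhds 0) := squeeze_zero hc0 hcb hgeo
  -- row stochastic powers
  have hpow := pow_row_stochastic W hW_nonneg hW_row
  -- min entry of W^n
  set δ : ℝ := (Finset.univ : Finset (Fin n × Fin n)).inf' Finset.univ_nonempty
    (fun p => (W ^ n) p.1 p.2) with hδdef
  have hδpos : 0 < δ := by
    rw [hδdef, Finset.lt_inf'_iff]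
    exact fun p _ => hWn_pos p.1 p.2
  have hδle : ∀ i j, δ ≤ (W ^ n) i j := fun i j =>
    Finset.inf'_le _ (Finset.mem_univ (i, j))
  have hnδ1 : (n : ℝ) * δ ≤ 1 := by
    obtain ⟨i₀⟩ := ‹Nonempty (Fin n)›
    calc (n : ℝ) * δ = ∑ _j : Fin n, δ := by
          rw [Finset.sum_const, Finset.card_univ, Fintype.card_fin, nsmul_eq_mul]
    _ ≤ ∑ j, (W ^ n) i₀ j := Finset.sum_le_sum fun j _ => hδle i₀ j
    _ = 1 := (hpow n).2 i₀
  set τ : ℝ := 1 - (n : ℝ) * δ with hτdef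
  have hτ0 : 0 ≤ τ := by rw [hτdef]; linarith
  have hτ1 : τ < 1 := by
    rw [hτdef]
    have : (0:ℝ) < (n:ℝ) * δ := by
      apply mul_pos _ hδpos
      exact_mod_cast hn0
    linarith
  -- oscillation contraction sequence
  set a : ℕ → ℝ := fun k => osc (x (n * k)) with hadef
  set ε : ℕ → ℝ := fun k => ∑ j ∈ Finset.range n, 2 * c (n * k + j) with hεdef
  -- generic oscillation bound over t steps
  have hstep : ∀ m t, osc (x (m + t)) ≤ osc ((W ^ t).mulVec (x m))
      + ∑ j ∈ Finset.range t, 2 * c (m + j) := by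
    intro m t
    rw [traj_formula W x θ hdyn m t]
    calc osc ((W ^ t).mulVec (x m) + ∑ j ∈ Finset.range t, (W ^ (t - j)).mulVec (θ (m + j)))
        ≤ osc ((W ^ t).mulVec (x m))
          + osc (∑ j ∈ Finset.range t, (W ^ (t - j)).mulVec (θ (m + j))) := osc_add_le _ _
    _ ≤ osc ((W ^ t).mulVec (x m)) + ∑ j ∈ Finset.range t, 2 * c (m + j) := by
        have h1 : osc (∑ j ∈ Finset.range t, (W ^ (t - j)).mulVec (θ (m + j)))
            ≤ ∑ j ∈ Finset.range t, osc ((W ^ (t - j)).mulVec (θ (m + j))) :=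
          osc_sum_le _ _
        have h2 : ∀ j ∈ Finset.range t,
            osc ((W ^ (t - j)).mulVec (θ (m + j))) ≤ 2 * c (m + j) := by
          intro j _
          have hb := osc_mulVec_le (W ^ (t - j)) 0 le_rfl
            (fun i jj => (hpow (t - j)).1 i jj) ((hpow (t - j)).2) (θ (m + j))
          simp only [mul_zero, sub_zero, one_mul] at hb
          exact hb.trans (osc_le_two_norm _)
        have h3 := Finset.sum_le_sum h2
        linarith
  have hrec : ∀ k, a (k + 1) ≤ τ * a k + ε k := by
    intro k
    have e1 : n * (k + 1) = n * k + n := by ring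
    have hb := hstep (n * k) n
    have hcon := osc_mulVec_le (W ^ n) δ hδpos.le hδle ((hpow n).2) (x (n * k))
    simp only [hadef, hεdef, e1]
    calc osc (x (n * k + n)) ≤ osc ((W ^ n).mulVec (x (n * k)))
        + ∑ j ∈ Finset.range n, 2 * c (n * k + j) := hb
    _ ≤ τ * osc (x (n * k)) + ∑ j ∈ Finset.range n, 2 * c (n * k + j) := by
        rw [hτdef]; linarith
  have hεtend : Tendsto ε atTop (nhds 0) := by
    have : Tendsto (fun k => ∑ j ∈ Finset.range n, 2 * c (n * k + j)) atTop
        (nhds (∑ _j ∈ Finset.range n, (0:ℝ))) := by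
      apply tendsto_finset_sum
      intro j _
      have htail : Tendsto (fun k : ℕ => n * k + j) atTop atTop := by
        apply tendsto_atTop_mono (fun k => ?_) tendsto_id
        show id k ≤ n * k + j
        have : k ≤ n * k := Nat.le_mul_of_pos_left k hn0
        simp only [id]
        omega
      have := (hctend.comp htail).const_mul 2
      simpa using this
    simpa using this
  have ha0 : ∀ k, 0 ≤ a k := fun k => osc_nonneg _
  have hatend : Tendsto a atTop (nhds 0) :=
    tendsto_zero_of_contract a ε τ hτ0 hτ1 ha0 hrec hεtend
  -- oscillation of x m tends to zero
  have hoscbound : ∀ m, osc (x m) ≤ a (m / n) + ε (m / n) := by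
    intro m
    have hm : n * (m / n) + m % n = m := Nat.div_add_mod m n
    have hr : m % n < n := Nat.mod_lt m hn0
    have hb := hstep (n * (m / n)) (m % n)
    rw [hm] at hb
    have hcon := osc_mulVec_le (W ^ (m % n)) 0 le_rfl
      (fun i jj => (hpow (m % n)).1 i jj) ((hpow (m % n)).2) (x (n * (m / n)))
    simp only [mul_zero, sub_zero, one_mul] at hcon
    have hsub : ∑ j ∈ Finset.range (m % n), 2 * c (n * (m / n) + j)
        ≤ ∑ j ∈ Finset.range n, 2 * c (n * (m / n) + j) := by
      apply Finset.sum_le_sum_of_subset_of_nonneg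
      · exact Finset.range_subset_range.mpr hr.le
      · intro j _ _
        have := hc0 (n * (m / n) + j)
        linarith
    simp only [hadef, hεdef]
    linarith
  have hdivn : Tendsto (fun m : ℕ => m / n) atTop atTop := by
    apply tendsto_atTop_atTop.mpr
    intro b
    exact ⟨b * n, fun m hm => (Nat.le_div_iff_mul_le hn0).2 hm⟩
  have hosc_tend : Tendsto (fun m => osc (x m)) atTop (nhds 0) := by
    apply squeeze_zero (fun m => osc_nonneg _) hoscbound
    have := (hatend.comp hdivn).add (hεtend.comp hdivn)
    simpa using this
  -- average conservation
  set S : ℕ → ℝ := fun k => ∑ i, x k i with hSdef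
  have hsum_mulVec : ∀ v : Fin n → ℝ, ∑ i, W.mulVec v i = ∑ j, v j := by
    intro v
    simp only [Matrix.mulVec, dotProduct]
    rw [Finset.sum_comm]
    calc ∑ j, ∑ i, W i j * v j = ∑ j, (∑ i, W i j) * v j := by
          simp [Finset.sum_mul]
    _ = ∑ j, v j := by
          apply Finset.sum_congr rfl
          intro j _
          rw [hW_col j, one_mul]
  have hS : ∀ k, S k = S 0 + ∑ ℓ ∈ Finset.range k, ∑ i, θ ℓ i := by
    intro k
    induction k with
    | zero => simp
    | succ k ih =>
        have hstepS : S (k + 1) = S k + ∑ i, θ k i := by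
          simp only [hSdef, hdyn k, hsum_mulVec]
          simp [Finset.sum_add_distrib]
        rw [hstepS, ih, Finset.sum_range_succ]
        ring
  have hPtend : Tendsto (fun k => ∑ ℓ ∈ Finset.range k, ∑ i, θ ℓ i) atTop (nhds 0) := by
    have h1 := hzero.comp (tendsto_sub_atTop_nat 1)
    apply Tendsto.congr' _ h1
    filter_upwards [eventually_ge_atTop 1] with k hk
    have : k - 1 + 1 = k := by omega
    simp only [Function.comp]
    rw [this]
  have hStend : Tendsto (fun k => S k / n) atTop (nhds (S 0 / n)) := by
    have hS' : Tendsto S atTop (nhds (S 0)) := by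
      have := hPtend.const_add (S 0)
      rw [add_zero] at this
      exact this.congr fun k => (hS k).symm
    exact hS'.div_const n
  intro i
  have hdiff : Tendsto (fun k => x k i - S k / n) atTop (nhds 0) := by
    apply squeeze_zero_norm (fun k => ?_) hosc_tend
    rw [Real.norm_eq_abs]
    exact abs_sub_avg_le_osc hn0 (x k) i
  have hfin := hdiff.add hStend
  rw [zero_add] at hfin
  have : (fun k => x k i - S k / n + S k / n) = fun k => x k i := by
    funext k; ring
  rw [this] at hfin
  exact hfin
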